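/- arXiv:1910.02559 — 2 statements merged into one kernel-verified Lean document; each statement's English description precedes it below -/
import Mathlib

section
/- The z-variable propagation constraints of formulation 3IF prevent crossing sorties: suppose z : N → {0,1}, a truck Hamiltonian-type path v(0),…,v(q), launches ℓ(v) ∈ {0,1} and returns r(v) ∈ {0,1} marking whether a sortie is launched (resp. terminates) at each node, satisfying (i) ℓ(v) ≤ z(v) for every node, (ii) z(v(h+1)) ≤ z(v(h)) − ℓ(v(h)) + r(v(h+1)), and (iii) at most one sortie is in flight initially (z(v(0)) ≤ 1). Then between any launch at v(a) and the first subsequent return at v(b) (a < b), no launch occurs at nodes v(a+1), …, v(b−1). -/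
/-- The `z`-variable propagation constraints of 3IF prevent crossing sorties:
between a launch at position `a` and the first subsequent return at position
`b`, no other launch occurs. Here `z h`, `ℓ h`, `r h` are the (binary)
drone-on-truck, launch and return indicators at the `h`-th route node. -/
theorem stmt_7 (q : ℕ) (z ℓ r : ℕ → ℕ)
    (hz : ∀ h ≤ q, z h = 0 ∨ z h = 1)
    (hℓ : ∀ h ≤ q, ℓ h = 0 ∨ ℓ h = 1)
    (hr : ∀ h ≤ q, r h = 0 ∨ r h = 1)
    (hlz : ∀ h ≤ q, ℓ h ≤ z h)
    (hprop : ∀ h, h + 1 ≤ q → z (h + 1) + ℓ h ≤ z h + r (h + 1))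
    (hz0 : z 0 ≤ 1)
    (a b : ℕ) (hab : a < b) (hbq : b ≤ q)
    (hlaunch : ℓ a = 1) (hret : r b = 1)
    (hfirst : ∀ h, a < h → h < b → r h = 0) :
    ∀ h, a < h → h < b → ℓ h = 0 := by
  have key : ∀ h, a < h → h < b → z h = 0 := by
    intro h
    induction h with
    | zero => omega
    | succ n ih =>
      intro h1 h2
      have hq : n + 1 ≤ q := by omega
      have hp := hprop n hq
      have hrn : r (n + 1) = 0 := hfirst (n + 1) h1 h2
      rcases Nat.lt_or_ge a n with hc | hc
      · have hzn := ih hc (by omega)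
        have hln : ℓ n ≤ z n := hlz n (by omega)
        omega
      · have hna : n = a := by omega
        subst hna
        have hza := hz n (by omega)
        omega
  intro h h1 h2
  have := hlz h (by omega)
  have := key h h1 h2
  omega
end

section
/- Validity of the tournament crossing-sorties elimination constraint: let P = (v(1), …, v(q)) be a directed path of distinct nodes, and suppose a feasible integer solution has x(v(h), v(h+1)) = 1 for all consecutive pairs of P, a sortie launched at v(1) towards a customer j, no rendezvous at any interior node of P, and a second sortie launched at v(q). Then the left-hand side ∑_{h<j} x(v(h),v(j)) + ∑_{j∉P} g→(v(1),j) + ∑_{j∉P} g→(v(q),j) equals |P| + 1 > |P|, so the constraint ∑_{h<j} x(v(h),v(j)) + ∑_{j∉P} g→(v(1),j) + ∑_{j∉P} g→(v(q),j) ≤ |P| is violated by exactly the crossing configurations and satisfied by all non-crossing feasible solutions in which the truck follows P consecutively. -/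
/-- Validity of the tournament crossing-sorties elimination constraint: if the
truck follows the path `v 0, …, v (q-1)` of `q ≥ 2` distinct nodes
consecutively, a sortie is launched at the first node towards a customer
outside the path, and a second sortie is launched at the last node towards a
customer outside the path, then the left-hand side of the tournament
constraint equals `q + 1 > q = |P|`, i.e. the constraint is violated. -/
theorem stmt_14 {Node : Type*} [Fintype Node] [DecidableEq Node]
    (x g : Node → Node → ℕ)
    (hxbin : ∀ i j, x i j = 0 ∨ x i j = 1)
    (hgbin : ∀ i j, g i j = 0 ∨ g i j = 1)
    -- at most one outgoing truck arc per node
    (hxout : ∀ i, (∑ j : Node, x i j) ≤ 1)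
    -- at most one launch per node
    (hgout : ∀ i, (∑ j : Node, g i j) ≤ 1)
    (q : ℕ) (hq : 2 ≤ q) (v : Fin q → Node) (hv : Function.Injective v)
    -- the truck travels the path consecutively
    (hpath : ∀ h : Fin q, (hh : (h : ℕ) + 1 < q) → x (v h) (v ⟨h + 1, hh⟩) = 1)
    -- a sortie launched at the first node of P towards a customer not in P
    (j0 : Node) (hj0 : ∀ h : Fin q, v h ≠ j0)
    (hlaunch0 : g (v ⟨0, by omega⟩) j0 = 1)
    -- a second sortie launched at the last node of P towards a customer not in P
    (j1 : Node) (hj1 : ∀ h : Fin q, v h ≠ j1)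
    (hlaunch1 : g (v ⟨q - 1, by omega⟩) j1 = 1) :
    (∑ h : Fin q, ∑ l : Fin q, if h < l then x (v h) (v l) else 0)
      + (∑ j ∈ Finset.univ.filter (fun j : Node => ∀ h : Fin q, v h ≠ j),
          g (v ⟨0, by omega⟩) j)
      + (∑ j ∈ Finset.univ.filter (fun j : Node => ∀ h : Fin q, v h ≠ j),
          g (v ⟨q - 1, by omega⟩) j)
      = q + 1 := by

  have gsum : ∀ (i j : Node), g i j = 1 → (∀ h : Fin q, v h ≠ j) →
      (∑ j' ∈ Finset.univ.filter (fun j' : Node => ∀ h : Fin q, v h ≠ j'), g i j') = 1 := by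
    intro i j hij hjP
    have hle : (∑ j' ∈ Finset.univ.filter (fun j' : Node => ∀ h : Fin q, v h ≠ j'), g i j') ≤ 1 :=
      le_trans (Finset.sum_le_sum_of_subset (Finset.filter_subset _ _)) (hgout i)
    have hmem : j ∈ Finset.univ.filter (fun j' : Node => ∀ h : Fin q, v h ≠ j') := by
      simp [hjP]
    have hge : 1 ≤ (∑ j' ∈ Finset.univ.filter (fun j' : Node => ∀ h : Fin q, v h ≠ j'), g i j') := by
      calc 1 = g i j := hij.symm
        _ ≤ _ := Finset.single_le_sum (fun _ _ => Nat.zero_le _) hmem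
    omega
  have hrow : ∀ h : Fin q, (∑ l : Fin q, if h < l then x (v h) (v l) else 0)
      = if (h : ℕ) + 1 < q then 1 else 0 := by
    intro h
    by_cases hh : (h : ℕ) + 1 < q
    · simp only [hh, if_true]
      have hle : (∑ l : Fin q, if h < l then x (v h) (v l) else 0) ≤ 1 := by
        have h1 : (∑ l : Fin q, if h < l then x (v h) (v l) else 0)
            ≤ ∑ l : Fin q, x (v h) (v l) := by
          apply Finset.sum_le_sum
          intro l _
          split <;> simp
        have h2 : (∑ l : Fin q, x (v h) (v l))
            = ∑ j ∈ Finset.univ.image v, x (v h) j := by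
          rw [Finset.sum_image (fun a _ b _ hab => hv hab)]
        have h3 : (∑ j ∈ Finset.univ.image v, x (v h) j) ≤ ∑ j : Node, x (v h) j :=
          Finset.sum_le_sum_of_subset (Finset.subset_univ _)
        exact le_trans h1 (le_trans (le_of_eq h2) (le_trans h3 (hxout _)))
      have hge : 1 ≤ (∑ l : Fin q, if h < l then x (v h) (v l) else 0) := by
        have hlt : h < (⟨(h : ℕ) + 1, hh⟩ : Fin q) := by
          simp [Fin.lt_def]
        calc 1 = x (v h) (v ⟨(h : ℕ) + 1, hh⟩) := (hpath h hh).symm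
          _ = if h < (⟨(h : ℕ) + 1, hh⟩ : Fin q) then x (v h) (v ⟨(h : ℕ) + 1, hh⟩) else 0 := by
              rw [if_pos hlt]
          _ ≤ _ := Finset.single_le_sum (f := fun l : Fin q => if h < l then x (v h) (v l) else 0)
              (fun _ _ => Nat.zero_le _) (Finset.mem_univ _)
      omega
    · simp only [hh, if_false]
      apply Finset.sum_eq_zero
      intro l _
      have : ¬ h < l := by
        have := l.isLt
        rw [Fin.lt_def]
        omega
      simp [this]
  have hxsum : (∑ h : Fin q, ∑ l : Fin q, if h < l then x (v h) (v l) else 0) = q - 1 := by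
    calc (∑ h : Fin q, ∑ l : Fin q, if h < l then x (v h) (v l) else 0)
        = ∑ h : Fin q, if (h : ℕ) + 1 < q then 1 else 0 := Finset.sum_congr rfl (fun h _ => hrow h)
      _ = ∑ i ∈ Finset.range q, if i + 1 < q then 1 else 0 := by
          rw [Finset.sum_range fun i => if i + 1 < q then 1 else 0]
      _ = ∑ i ∈ Finset.range (q - 1), 1 := by
          rw [Finset.sum_ite, Finset.sum_const_zero, add_zero]
          congr 1
          ext i
          simp only [Finset.mem_filter, Finset.mem_range]
          omega
      _ = q - 1 := by simp
  rw [hxsum, gsum _ j0 hlaunch0 hj0, gsum _ j1 hlaunch1 hj1]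
  omega
end
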